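/- arXiv:1811.09658 — 5 statements merged into one kernel-verified Lean document; each statement's English description precedes it below -/
import Mathlib

section
/- The stratum Y₃ consists of a single matrix: the only A ∈ SU(4) with d(A) = 3 is A = −I₄, where I₄ is the 4×4 identity matrix. -/
/-- The intersection of the `(-1)`-eigenspace of a `4 × 4` complex matrix `A` with the span
of the first three standard basis vectors: `{x ∈ ℂ⁴ : A·x = -x and x₃ = 0}`. -/
noncomputable def Espace (A : Matrix (Fin 4) (Fin 4) ℂ) : Submodule ℂ (Fin 4 → ℂ) :=
  LinearMap.ker (A.mulVecLin + LinearMap.id) ⊓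
    LinearMap.ker (LinearMap.proj (R := ℂ) (φ := fun _ : Fin 4 => ℂ) (3 : Fin 4))

/-- `d(A) = dim_ℂ E(A)`. -/
noncomputable def eigDim (A : Matrix (Fin 4) (Fin 4) ℂ) : ℕ :=
  Module.finrank ℂ (Espace A)

lemma finrank_ker_proj :
    Module.finrank ℂ (LinearMap.ker (LinearMap.proj (R := ℂ) (φ := fun _ : Fin 4 => ℂ) (3 : Fin 4))) = 3 := by
  have h := LinearMap.finrank_range_add_finrank_ker
    (LinearMap.proj (R := ℂ) (φ := fun _ : Fin 4 => ℂ) (3 : Fin 4))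
  have hsurj : Function.Surjective (LinearMap.proj (R := ℂ) (φ := fun _ : Fin 4 => ℂ) (3 : Fin 4)) := by
    intro c; exact ⟨fun _ => c, rfl⟩
  rw [LinearMap.range_eq_top.mpr hsurj] at h
  simp [Module.finrank_pi, Module.finrank_self] at h
  omega

/-- The only `A ∈ SU(4)` with `d(A) = 3` is `A = -I₄`. -/
theorem stratum_three_eq_neg_one (A : Matrix.specialUnitaryGroup (Fin 4) ℂ) :
    eigDim (A : Matrix (Fin 4) (Fin 4) ℂ) = 3 ↔
      (A : Matrix (Fin 4) (Fin 4) ℂ) = -(1 : Matrix (Fin 4) (Fin 4) ℂ) := by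
  set M : Matrix (Fin 4) (Fin 4) ℂ := (A : Matrix (Fin 4) (Fin 4) ℂ) with hM
  constructor
  · intro h3
    -- Espace M ≤ ker proj and both have finrank 3, so equal
    have hle : Espace M ≤ LinearMap.ker (LinearMap.proj (R := ℂ) (φ := fun _ : Fin 4 => ℂ) (3 : Fin 4)) :=
      inf_le_right
    have heq : Espace M = LinearMap.ker (LinearMap.proj (R := ℂ) (φ := fun _ : Fin 4 => ℂ) (3 : Fin 4)) :=
      Submodule.eq_of_le_of_finrank_eq hle (h3.trans finrank_ker_proj.symm)
    -- columns: for j ≠ 3, M *ᵥ e_j = -e_j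
    have hcol : ∀ j : Fin 4, j ≠ 3 → ∀ i, M i j = if i = j then -1 else 0 := by
      intro j hj i
      have hmem : (Pi.single j 1 : Fin 4 → ℂ) ∈ Espace M := by
        rw [heq]
        simp [LinearMap.mem_ker, Pi.single_apply, hj]
      have hk := (Submodule.mem_inf.mp hmem).1
      rw [LinearMap.mem_ker] at hk
      have h0 : M.mulVec (Pi.single j 1) + Pi.single j 1 = 0 := hk
      have := congrFun h0 i
      simp only [Pi.add_apply, Matrix.mulVec_single, mul_one, Pi.zero_apply, MulOpposite.op_one, one_smul, Matrix.col_apply] at this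
      rw [Pi.single_apply] at this
      by_cases h : i = j
      · rw [if_pos h] at this; rw [if_pos h]; linear_combination this
      · rw [if_neg h] at this; rw [if_neg h]; linear_combination this
    -- unitarity
    have hU : star M * M = 1 := A.2.1.1
    have ha : ∀ i : Fin 4, i ≠ 3 → M i 3 = 0 := by
      intro i hi
      have hs := congrFun (congrFun hU i) 3
      rw [Matrix.mul_apply] at hs
      simp only [Matrix.star_apply, Matrix.one_apply, if_neg hi] at hs
      rw [Fin.sum_univ_four] at hs
      simp only [hcol i hi] at hs
      fin_cases i <;> simp_all
    have hdiag : M = Matrix.diagonal (fun i : Fin 4 => if i = 3 then M 3 3 else -1) := by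
      ext i j
      rw [Matrix.diagonal_apply]
      by_cases hj : j = 3
      · subst hj
        by_cases hi : i = 3
        · subst hi; simp
        · rw [ha i hi, if_neg hi]
      · rw [hcol j hj i]
        by_cases h : i = j
        · rw [if_pos h, if_pos h, if_neg (h ▸ hj)]
        · rw [if_neg h, if_neg h]
    have hdet : M.det = 1 := A.2.2
    rw [hdiag, Matrix.det_diagonal, Fin.prod_univ_four] at hdet
    rw [if_neg (show (0:Fin 4) ≠ 3 by decide), if_neg (show (1:Fin 4) ≠ 3 by decide),
      if_neg (show (2:Fin 4) ≠ 3 by decide), if_pos rfl] at hdet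
    norm_num at hdet
    have h33 : M 3 3 = -1 := by linear_combination -hdet
    rw [hdiag, h33]
    ext i j
    rw [Matrix.diagonal_apply, Matrix.neg_apply, Matrix.one_apply]
    by_cases h : i = j
    · rw [if_pos h, if_pos h]; split <;> simp
    · rw [if_neg h, if_neg h]; simp
  · intro hA
    have : Espace M = LinearMap.ker (LinearMap.proj (R := ℂ) (φ := fun _ : Fin 4 => ℂ) (3 : Fin 4)) := by
      rw [Espace, hA]
      have : (-(1 : Matrix (Fin 4) (Fin 4) ℂ)).mulVecLin + LinearMap.id = 0 := by
        ext x i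
        simp [Matrix.mulVecLin, Matrix.neg_apply, Matrix.one_apply, Pi.single_apply]
      rw [this]
      simp
    rw [eigDim, this, finrank_ker_proj]
end

section
/- The inclusion map Y₀ → SU(4) is homotopic, through continuous maps from Y₀ (with the subspace topology) to SU(4), to the constant map sending every point of Y₀ to the identity matrix; that is, Y₀ retracts to {Id} inside SU(4). -/
noncomputable section
open Matrix

abbrev V4 := Fin 4 → ℂ

def dC (x y : V4) : ℂ := ∑ i, (starRingEnd ℂ) (x i) * y i

lemma dC_expand (x y : V4) : dC x y = (starRingEnd ℂ) (x 0) * y 0 + (starRingEnd ℂ) (x 1) * y 1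
    + (starRingEnd ℂ) (x 2) * y 2 + (starRingEnd ℂ) (x 3) * y 3 := by
  simp [dC, Fin.sum_univ_four]

lemma star_dC (x y : V4) : (starRingEnd ℂ) (dC x y) = dC y x := by
  simp only [dC_expand, map_add, RingHom.map_mul, Complex.conj_conj]; ring

lemma dC_normSq (x : V4) :
    dC x x = ((Complex.normSq (x 0) + Complex.normSq (x 1) + Complex.normSq (x 2)
      + Complex.normSq (x 3) : ℝ) : ℂ) := by
  simp only [dC_expand, ← Complex.normSq_eq_conj_mul_self]
  push_cast; ring

lemma dC_self_re (x : V4) : dC x x = ((dC x x).re : ℂ) := by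
  rw [dC_normSq]; simp

lemma dC_self_re_nonneg (x : V4) : 0 ≤ (dC x x).re := by
  rw [dC_normSq]
  simp only [Complex.ofReal_re]
  have := Complex.normSq_nonneg (x 0); have := Complex.normSq_nonneg (x 1)
  have := Complex.normSq_nonneg (x 2); have := Complex.normSq_nonneg (x 3)
  linarith

lemma dC_sum_normSq (x : V4) : dC x x = ((∑ i, Complex.normSq (x i) : ℝ) : ℂ) := by
  rw [dC_normSq]; rw [Fin.sum_univ_four]

lemma dC_self_eq_zero {x : V4} (h : dC x x = 0) : x = 0 := by
  rw [dC_sum_normSq] at h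
  norm_cast at h
  have h0 := (Finset.sum_eq_zero_iff_of_nonneg
    (fun i _ => Complex.normSq_nonneg (x i))).mp h
  funext i
  simpa [Complex.normSq_eq_zero] using h0 i (Finset.mem_univ i)

lemma dC_sub_right (x y z : V4) : dC x (y - z) = dC x y - dC x z := by
  simp [dC_expand]; ring

lemma dC_smul_right (c : ℂ) (x y : V4) : dC x (c • y) = c * dC x y := by
  simp [dC_expand]; ring

lemma dC_smul_left (c : ℂ) (x y : V4) : dC (c • x) y = (starRingEnd ℂ) c * dC x y := by
  simp [dC_expand, RingHom.map_mul]; ring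

/-- Gram-Schmidt (unnormalized) -/
def gs2 (b1 b2 : V4) : V4 := b2 - (dC b1 b2 / dC b1 b1) • b1

def gs3 (b1 b2 b3 : V4) : V4 :=
  b3 - (dC b1 b3 / dC b1 b1) • b1
    - (dC (gs2 b1 b2) b3 / dC (gs2 b1 b2) (gs2 b1 b2)) • (gs2 b1 b2)

/-- normalize -/
def nv (v : V4) : V4 := ((Real.sqrt (dC v v).re : ℝ) : ℂ)⁻¹ • v

lemma dC_gs2 (b1 b2 : V4) (h : dC b1 b1 ≠ 0) : dC b1 (gs2 b1 b2) = 0 := by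
  rw [gs2, dC_sub_right, dC_smul_right, div_mul_cancel₀ _ h, sub_self]

lemma dC_gs2' (b1 b2 : V4) (h : dC b1 b1 ≠ 0) : dC (gs2 b1 b2) b1 = 0 := by
  rw [← star_dC, dC_gs2 _ _ h, map_zero]

lemma dC_gs3_left (b1 b2 b3 : V4) (h : dC b1 b1 ≠ 0) : dC b1 (gs3 b1 b2 b3) = 0 := by
  rw [gs3, dC_sub_right, dC_sub_right, dC_smul_right, dC_smul_right,
    div_mul_cancel₀ _ h, dC_gs2 _ _ h]
  ring

lemma dC_gs3_mid (b1 b2 b3 : V4) (h1 : dC b1 b1 ≠ 0) (h2 : dC (gs2 b1 b2) (gs2 b1 b2) ≠ 0) :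
    dC (gs2 b1 b2) (gs3 b1 b2 b3) = 0 := by
  rw [gs3, dC_sub_right, dC_sub_right, dC_smul_right, dC_smul_right,
    div_mul_cancel₀ _ h2, dC_gs2' _ _ h1]
  ring

lemma dC_nv_self {v : V4} (h : v ≠ 0) : dC (nv v) (nv v) = 1 := by
  have hd : dC v v ≠ 0 := fun hc => h (dC_self_eq_zero hc)
  have hre : (dC v v).re ≠ 0 := by
    intro hc
    apply hd
    rw [dC_self_re, hc, Complex.ofReal_zero]
  have hpos : 0 < (dC v v).re := lt_of_le_of_ne (dC_self_re_nonneg v) (Ne.symm hre)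
  rw [nv, dC_smul_left, dC_smul_right]
  rw [map_inv₀, Complex.conj_ofReal]
  rw [dC_self_re v]
  simp only [Complex.ofReal_re]
  have hs : Real.sqrt (dC v v).re ≠ 0 := Real.sqrt_ne_zero'.mpr hpos
  rw [← Complex.ofReal_inv, ← Complex.ofReal_mul, ← Complex.ofReal_mul]
  norm_cast
  field_simp
  exact (Real.sq_sqrt hpos.le).symm

lemma nv_smul (v : V4) : ∃ c : ℂ, nv v = c • v := ⟨_, rfl⟩

def det3r (u1 u2 u3 : V4) (r s t : Fin 4) : ℂ :=
  u1 r * (u2 s * u3 t - u2 t * u3 s) - u2 r * (u1 s * u3 t - u1 t * u3 s)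
    + u3 r * (u1 s * u2 t - u1 t * u2 s)

def cof (u1 u2 u3 : V4) : V4 :=
  ![-(det3r u1 u2 u3 1 2 3), det3r u1 u2 u3 0 2 3, -(det3r u1 u2 u3 0 1 3), det3r u1 u2 u3 0 1 2]

def crossv (u1 u2 u3 : V4) : V4 := fun i => (starRingEnd ℂ) (cof u1 u2 u3 i)

lemma sum_mul_cof₁ (u1 u2 u3 : V4) : ∑ i, u1 i * cof u1 u2 u3 i = 0 := by
  simp [Fin.sum_univ_four, cof, det3r]; ring

lemma sum_mul_cof₂ (u1 u2 u3 : V4) : ∑ i, u2 i * cof u1 u2 u3 i = 0 := by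
  simp [Fin.sum_univ_four, cof, det3r]; ring

lemma sum_mul_cof₃ (u1 u2 u3 : V4) : ∑ i, u3 i * cof u1 u2 u3 i = 0 := by
  simp [Fin.sum_univ_four, cof, det3r]; ring

lemma sum_cof_normSq (u1 u2 u3 : V4) :
    ∑ i, (starRingEnd ℂ) (cof u1 u2 u3 i) * cof u1 u2 u3 i =
      dC u1 u1 * (dC u2 u2 * dC u3 u3 - dC u2 u3 * dC u3 u2)
      - dC u1 u2 * (dC u2 u1 * dC u3 u3 - dC u2 u3 * dC u3 u1)
      + dC u1 u3 * (dC u2 u1 * dC u3 u2 - dC u2 u2 * dC u3 u1) := by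
  simp only [Fin.sum_univ_four, cof, det3r, dC_expand, map_sub, map_add, map_neg,
    RingHom.map_mul, Matrix.cons_val_zero, Matrix.cons_val_one, Matrix.head_cons,
    Matrix.cons_val_two, Matrix.tail_cons, Matrix.cons_val_three]
  ring

def colMat (u1 u2 u3 u4 : V4) : Matrix (Fin 4) (Fin 4) ℂ :=
  Matrix.of fun i j => ![u1, u2, u3, u4] j i

lemma det_colMat (u1 u2 u3 u4 : V4) :
    (colMat u1 u2 u3 u4).det = ∑ i, u4 i * cof u1 u2 u3 i := by
  have e1 : (Fin.succ 2 : Fin 4) = 3 := rfl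
  have e3 : (Fin.castSucc 2 : Fin 4) = 2 := rfl
  have f1 : ((1 : Fin 4).succAbove 2) = 3 := rfl
  have f2 : ((2 : Fin 4).succAbove 2) = 3 := rfl
  have f3 : ((3 : Fin 4).succAbove 2) = 2 := rfl
  simp [Matrix.det_succ_row_zero, Fin.sum_univ_succ, colMat, cof, det3r,
    Fin.sum_univ_four, e1, e3, f1, f2, f3]
  ring

lemma dC_crossv (u1 u2 u3 x : V4) :
    dC x (crossv u1 u2 u3) = (starRingEnd ℂ) (∑ i, x i * cof u1 u2 u3 i) := by
  simp [dC, crossv, Fin.sum_univ_four, RingHom.map_mul, map_add]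

lemma dC_crossv_self (u1 u2 u3 : V4) :
    dC (crossv u1 u2 u3) (crossv u1 u2 u3) =
      ∑ i, (starRingEnd ℂ) (cof u1 u2 u3 i) * cof u1 u2 u3 i := by
  simp only [dC, crossv, Complex.conj_conj]
  exact Finset.sum_congr rfl fun i _ => mul_comm _ _

lemma colMat_mem_SU {u1 u2 u3 : V4}
    (o11 : dC u1 u1 = 1) (o22 : dC u2 u2 = 1) (o33 : dC u3 u3 = 1)
    (o12 : dC u1 u2 = 0) (o13 : dC u1 u3 = 0) (o23 : dC u2 u3 = 0) :
    colMat u1 u2 u3 (crossv u1 u2 u3) ∈ Matrix.specialUnitaryGroup (Fin 4) ℂ := by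
  have o21 : dC u2 u1 = 0 := by rw [← star_dC, o12, map_zero]
  have o31 : dC u3 u1 = 0 := by rw [← star_dC, o13, map_zero]
  have o32 : dC u3 u2 = 0 := by rw [← star_dC, o23, map_zero]
  set u4 := crossv u1 u2 u3 with hu4
  have c14 : dC u1 u4 = 0 := by rw [hu4, dC_crossv, sum_mul_cof₁, map_zero]
  have c24 : dC u2 u4 = 0 := by rw [hu4, dC_crossv, sum_mul_cof₂, map_zero]
  have c34 : dC u3 u4 = 0 := by rw [hu4, dC_crossv, sum_mul_cof₃, map_zero]
  have c41 : dC u4 u1 = 0 := by rw [← star_dC, c14, map_zero]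
  have c42 : dC u4 u2 = 0 := by rw [← star_dC, c24, map_zero]
  have c43 : dC u4 u3 = 0 := by rw [← star_dC, c34, map_zero]
  have c44 : dC u4 u4 = 1 := by
    rw [hu4, dC_crossv_self, sum_cof_normSq, o11, o22, o33, o12, o13, o21, o23, o31, o32]
    ring
  have hdet : (colMat u1 u2 u3 u4).det = 1 := by
    rw [det_colMat]
    have e : ∑ i, u4 i * cof u1 u2 u3 i = dC u4 u4 := by
      rw [hu4, dC_crossv_self]
      exact Finset.sum_congr rfl fun i _ => rfl
    rw [e, c44]
  rw [Matrix.mem_specialUnitaryGroup_iff]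
  refine ⟨Matrix.mem_unitaryGroup_iff'.mpr ?_, hdet⟩
  have key : ∀ i j : Fin 4, (star (colMat u1 u2 u3 u4) * colMat u1 u2 u3 u4) i j
      = dC (![u1, u2, u3, u4] i) (![u1, u2, u3, u4] j) := by
    intro i j
    rw [Matrix.mul_apply, dC]
    refine Finset.sum_congr rfl fun k _ => ?_
    simp [Matrix.star_apply, colMat]
  ext i j
  rw [key i j]
  fin_cases i <;> fin_cases j <;>
    simp [o11, o22, o33, o12, o13, o23, o21, o31, o32, c14, c24, c34, c41, c42, c43, c44,
      Matrix.one_apply]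

def Indep (b1 b2 b3 : V4) : Prop :=
  ∀ x y z : ℂ, x • b1 + y • b2 + z • b3 = 0 → x = 0 ∧ y = 0 ∧ z = 0

lemma Indep.b1_ne {b1 b2 b3 : V4} (H : Indep b1 b2 b3) : b1 ≠ 0 := by
  intro h
  have := H 1 0 0 (by simp [h])
  exact one_ne_zero this.1

lemma Indep.gs2_ne {b1 b2 b3 : V4} (H : Indep b1 b2 b3) : gs2 b1 b2 ≠ 0 := by
  intro h
  have e : (-(dC b1 b2 / dC b1 b1)) • b1 + (1 : ℂ) • b2 + (0 : ℂ) • b3 = 0 := by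
    rw [← h]; funext i; simp [gs2]; ring
  exact one_ne_zero (H _ _ _ e).2.1

lemma Indep.gs3_ne {b1 b2 b3 : V4} (H : Indep b1 b2 b3) : gs3 b1 b2 b3 ≠ 0 := by
  intro h
  have e : (dC (gs2 b1 b2) b3 / dC (gs2 b1 b2) (gs2 b1 b2) * (dC b1 b2 / dC b1 b1)
        - dC b1 b3 / dC b1 b1) • b1
      + (-(dC (gs2 b1 b2) b3 / dC (gs2 b1 b2) (gs2 b1 b2))) • b2 + (1 : ℂ) • b3 = 0 := by
    rw [← h]
    funext i
    have hg : gs2 b1 b2 i = b2 i - dC b1 b2 / dC b1 b1 * b1 i := by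
      simp [gs2]
    simp only [gs3, Pi.add_apply, Pi.sub_apply, Pi.smul_apply, smul_eq_mul, hg, one_mul,
      neg_mul]
    ring
  exact one_ne_zero (H _ _ _ e).2.2

lemma dC_ne_of_ne {v : V4} (h : v ≠ 0) : dC v v ≠ 0 := fun hc => h (dC_self_eq_zero hc)

lemma nv_dC_zero {x y : V4} (h : dC x y = 0) : dC (nv x) (nv y) = 0 := by
  rw [nv, nv, dC_smul_left, dC_smul_right, h, mul_zero, mul_zero]

/-- the orthonormalization-completion map -/
def Phi (B : Matrix (Fin 4) (Fin 4) ℂ) : Matrix (Fin 4) (Fin 4) ℂ :=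
  colMat (nv (fun i => B i 0)) (nv (gs2 (fun i => B i 0) (fun i => B i 1)))
    (nv (gs3 (fun i => B i 0) (fun i => B i 1) (fun i => B i 2)))
    (crossv (nv (fun i => B i 0)) (nv (gs2 (fun i => B i 0) (fun i => B i 1)))
      (nv (gs3 (fun i => B i 0) (fun i => B i 1) (fun i => B i 2))))

lemma Phi_mem_SU {B : Matrix (Fin 4) (Fin 4) ℂ}
    (H : Indep (fun i => B i 0) (fun i => B i 1) (fun i => B i 2)) :
    Phi B ∈ Matrix.specialUnitaryGroup (Fin 4) ℂ := by
  set b1 : V4 := fun i => B i 0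
  set b2 : V4 := fun i => B i 1
  set b3 : V4 := fun i => B i 2
  have h1 : b1 ≠ 0 := H.b1_ne
  have h2 : gs2 b1 b2 ≠ 0 := H.gs2_ne
  have h3 : gs3 b1 b2 b3 ≠ 0 := H.gs3_ne
  have d1 : dC b1 b1 ≠ 0 := dC_ne_of_ne h1
  have d2 : dC (gs2 b1 b2) (gs2 b1 b2) ≠ 0 := dC_ne_of_ne h2
  exact colMat_mem_SU (dC_nv_self h1) (dC_nv_self h2) (dC_nv_self h3)
    (nv_dC_zero (dC_gs2 _ _ d1)) (nv_dC_zero (dC_gs3_left _ _ _ d1))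
    (nv_dC_zero (dC_gs3_mid _ _ _ d1 d2))

lemma su_unique_cols {A U : Matrix (Fin 4) (Fin 4) ℂ}
    (hA : A ∈ Matrix.specialUnitaryGroup (Fin 4) ℂ)
    (hU : U ∈ Matrix.specialUnitaryGroup (Fin 4) ℂ)
    (hc : ∀ i : Fin 4, ∀ j : Fin 4, j ≠ 3 → U i j = A i j) : U = A := by
  obtain ⟨hAu, hAd⟩ := Matrix.mem_specialUnitaryGroup_iff.mp hA
  obtain ⟨hUu, hUd⟩ := Matrix.mem_specialUnitaryGroup_iff.mp hU
  have hA1 : star A * A = 1 := Matrix.mem_unitaryGroup_iff'.mp hAu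
  have hA2 : A * star A = 1 := Matrix.mem_unitaryGroup_iff.mp hAu
  set Q := star A * U with hQ
  have hQu : Q ∈ Matrix.unitaryGroup (Fin 4) ℂ :=
    mul_mem (Unitary.star_mem hAu) hUu
  have hQ1 : star Q * Q = 1 := Matrix.mem_unitaryGroup_iff'.mp hQu
  -- first three columns of Q agree with the identity
  have hcol : ∀ i j : Fin 4, j ≠ 3 → Q i j = (1 : Matrix (Fin 4) (Fin 4) ℂ) i j := by
    intro i j hj
    have e : Q i j = (star A * A) i j := by
      rw [hQ, Matrix.mul_apply, Matrix.mul_apply]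
      exact Finset.sum_congr rfl fun k _ => by rw [hc k j hj]
    rw [e, hA1]
  -- entries of the last column off the corner vanish
  have hlast : ∀ i : Fin 4, i ≠ 3 → Q i 3 = 0 := by
    intro i hi
    have h03 : (star Q * Q) i 3 = 0 := by rw [hQ1]; simp [Matrix.one_apply, hi]
    rw [Matrix.mul_apply] at h03
    have e : ∀ k : Fin 4, (star Q) i k * Q k 3 = (if k = i then Q i 3 else 0) := by
      intro k
      rw [Matrix.star_apply, hcol k i hi, Matrix.one_apply]
      by_cases hk : k = i <;> simp [hk]
    rw [Finset.sum_congr rfl fun k _ => e k] at h03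
    simpa using h03
  have hQdiag : Q = Matrix.diagonal ![1, 1, 1, Q 3 3] := by
    ext i j
    by_cases hj : j = 3
    · subst hj
      by_cases hi : i = 3
      · subst hi; simp [Matrix.diagonal]
      · rw [hlast i hi, Matrix.diagonal_apply_ne _ hi]
    · rw [hcol i j hj, Matrix.one_apply, Matrix.diagonal_apply]
      by_cases hij : i = j
      · subst hij
        simp only [if_pos rfl]
        fin_cases i <;> simp_all
      · simp [hij]
  have hdetQ : Q.det = 1 := by
    rw [hQ, Matrix.det_mul, Matrix.star_eq_conjTranspose, Matrix.det_conjTranspose, hAd, hUd]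
    simp
  have hq : Q 3 3 = 1 := by
    rw [hQdiag, Matrix.det_diagonal, Fin.prod_univ_four] at hdetQ
    simpa using hdetQ
  have hQ1' : Q = 1 := by
    rw [hQdiag, hq]
    ext i j
    rw [Matrix.diagonal_apply, Matrix.one_apply]
    by_cases hij : i = j
    · subst hij; simp; fin_cases i <;> rfl
    · simp [hij]
  calc U = (A * star A) * U := by rw [hA2, one_mul]
    _ = A * Q := by rw [mul_assoc, hQ]
    _ = A := by rw [hQ1', mul_one]

lemma dC_add_right (x y z : V4) : dC x (y + z) = dC x y + dC x z := by
  simp [dC_expand]; ring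

lemma dC_zero_right (x : V4) : dC x 0 = 0 := by simp [dC_expand]

lemma dC_col_col (A : Matrix (Fin 4) (Fin 4) ℂ) (i j : Fin 4) :
    dC (fun r => A r i) (fun r => A r j) = (star A * A) i j := by
  rw [Matrix.mul_apply, dC]
  exact Finset.sum_congr rfl fun k _ => by rw [Matrix.star_apply]; rfl

lemma indep_of_orthonormal {b1 b2 b3 : V4}
    (o11 : dC b1 b1 = 1) (o22 : dC b2 b2 = 1) (o33 : dC b3 b3 = 1)
    (o12 : dC b1 b2 = 0) (o13 : dC b1 b3 = 0) (o23 : dC b2 b3 = 0) :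
    Indep b1 b2 b3 := by
  have o21 : dC b2 b1 = 0 := by rw [← star_dC, o12, map_zero]
  have o31 : dC b3 b1 = 0 := by rw [← star_dC, o13, map_zero]
  have o32 : dC b3 b2 = 0 := by rw [← star_dC, o23, map_zero]
  intro x y z h
  refine ⟨?_, ?_, ?_⟩
  · have := congrArg (dC b1) h
    rwa [dC_add_right, dC_add_right, dC_smul_right, dC_smul_right, dC_smul_right,
      o11, o12, o13, dC_zero_right, mul_one, mul_zero, mul_zero, add_zero, add_zero] at this
  · have := congrArg (dC b2) h
    rwa [dC_add_right, dC_add_right, dC_smul_right, dC_smul_right, dC_smul_right,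
      o21, o22, o23, dC_zero_right, mul_one, mul_zero, mul_zero, zero_add, add_zero] at this
  · have := congrArg (dC b3) h
    rwa [dC_add_right, dC_add_right, dC_smul_right, dC_smul_right, dC_smul_right,
      o31, o32, o33, dC_zero_right, mul_one, mul_zero, mul_zero, zero_add, zero_add] at this

lemma nv_of_unit {v : V4} (h : dC v v = 1) : nv v = v := by
  rw [nv, h]
  norm_num

lemma Phi_fix {A : Matrix (Fin 4) (Fin 4) ℂ}
    (hA : A ∈ Matrix.specialUnitaryGroup (Fin 4) ℂ) : Phi A = A := by
  have hA1 : star A * A = 1 :=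
    Matrix.mem_unitaryGroup_iff'.mp (Matrix.mem_specialUnitaryGroup_iff.mp hA).1
  set b1 : V4 := fun i => A i 0 with hb1
  set b2 : V4 := fun i => A i 1 with hb2
  set b3 : V4 := fun i => A i 2 with hb3
  have o : ∀ i j : Fin 4, dC (fun r => A r i) (fun r => A r j) = (1 : Matrix (Fin 4) (Fin 4) ℂ) i j := by
    intro i j; rw [dC_col_col, hA1]
  have o11 : dC b1 b1 = 1 := by rw [hb1, o]; simp
  have o22 : dC b2 b2 = 1 := by rw [hb2, o]; simp
  have o33 : dC b3 b3 = 1 := by rw [hb3, o]; simp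
  have o12 : dC b1 b2 = 0 := by rw [hb1, hb2, o]; simp [Matrix.one_apply]
  have o13 : dC b1 b3 = 0 := by rw [hb1, hb3, o]; simp [Matrix.one_apply]
  have o23 : dC b2 b3 = 0 := by rw [hb2, hb3, o]; simp [Matrix.one_apply]
  have hg2 : gs2 b1 b2 = b2 := by rw [gs2, o12]; simp
  have hg3 : gs3 b1 b2 b3 = b3 := by rw [gs3, hg2, o13, o23]; simp
  have hq1 : nv b1 = b1 := nv_of_unit o11
  have hq2 : nv (gs2 b1 b2) = b2 := by rw [hg2]; exact nv_of_unit o22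
  have hq3 : nv (gs3 b1 b2 b3) = b3 := by rw [hg3]; exact nv_of_unit o33
  have hmem : Phi A ∈ Matrix.specialUnitaryGroup (Fin 4) ℂ :=
    Phi_mem_SU (indep_of_orthonormal o11 o22 o33 o12 o13 o23)
  refine su_unique_cols hA hmem ?_
  intro i j hj
  have : Phi A i j = ![nv b1, nv (gs2 b1 b2), nv (gs3 b1 b2 b3),
      crossv (nv b1) (nv (gs2 b1 b2)) (nv (gs3 b1 b2 b3))] j i := rfl
  rw [this, hq1, hq2, hq3]
  fin_cases j <;> simp_all [hb1, hb2, hb3]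

lemma dC_eq_dot (x y : V4) : dC x y = dotProduct (star x) y := by
  simp [dC, dotProduct]

lemma dC_mulVec {A : Matrix (Fin 4) (Fin 4) ℂ} (hA : star A * A = 1) (v : V4) :
    dC (A.mulVec v) (A.mulVec v) = dC v v := by
  rw [dC_eq_dot, dC_eq_dot, Matrix.star_mulVec, Matrix.dotProduct_mulVec,
    Matrix.vecMul_vecMul, ← Matrix.star_eq_conjTranspose, hA, Matrix.vecMul_one]

lemma indep_interp {A : Matrix (Fin 4) (Fin 4) ℂ}
    (hA : A ∈ Matrix.specialUnitaryGroup (Fin 4) ℂ) (hE : eigDim A = 0)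
    {α β : ℝ} (hα : 0 ≤ α) (hβ : 0 ≤ β) (hpos : 0 < α + β) :
    Indep (fun i => ((α : ℂ) • A + (β : ℂ) • 1) i 0)
      (fun i => ((α : ℂ) • A + (β : ℂ) • 1) i 1)
      (fun i => ((α : ℂ) • A + (β : ℂ) • 1) i 2) := by
  have hA1 : star A * A = 1 :=
    Matrix.mem_unitaryGroup_iff'.mp (Matrix.mem_specialUnitaryGroup_iff.mp hA).1
  intro x y z h
  set v : V4 := ![x, y, z, 0] with hv
  have hmv : (α : ℂ) • A.mulVec v + (β : ℂ) • v = 0 := by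
    have expand : ∀ i : Fin 4, (α : ℂ) * (A.mulVec v) i + (β : ℂ) * v i =
        (x • (fun i => ((α : ℂ) • A + (β : ℂ) • 1) i 0)
          + y • (fun i => ((α : ℂ) • A + (β : ℂ) • 1) i 1)
          + z • (fun i => ((α : ℂ) • A + (β : ℂ) • 1) i 2)) i := by
      intro i
      simp only [Matrix.mulVec, dotProduct, Fin.sum_univ_four, hv, Pi.add_apply,
        Pi.smul_apply, Matrix.add_apply, Matrix.smul_apply, Matrix.one_apply, smul_eq_mul]
      fin_cases i <;> simp <;> ring_nf
    funext i
    rw [Pi.add_apply, Pi.smul_apply, Pi.smul_apply, Pi.zero_apply, smul_eq_mul, smul_eq_mul,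
      expand i, h]
    rfl
  have hv0 : v = 0 := by
    by_cases hab : α = β
    · -- α = β > 0 : -1 eigenvector with last coordinate zero
      subst hab
      have hα' : 0 < α := by linarith
      have hc : (α : ℂ) ≠ 0 := by exact_mod_cast hα'.ne'
      have he : A.mulVec v + v = 0 := by
        have h2 : (α : ℂ) • (A.mulVec v + v) = 0 := by rw [smul_add]; exact hmv
        rcases smul_eq_zero.mp h2 with h' | h'
        · exact absurd h' hc
        · exact h'
      have hmem : v ∈ Espace A := by
        rw [Espace, Submodule.mem_inf]
        refine ⟨LinearMap.mem_ker.mpr ?_, LinearMap.mem_ker.mpr ?_⟩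
        · show A.mulVecLin v + LinearMap.id v = 0
          simpa [Matrix.mulVecLin_apply] using he
        · show v 3 = 0
          rfl
      have hbot : Espace A = ⊥ := Submodule.finrank_eq_zero.mp hE
      rw [hbot] at hmem
      exact (Submodule.mem_bot ℂ).mp hmem
    · -- α ≠ β : norm comparison
      have heq : (α : ℂ) • A.mulVec v = -((β : ℂ) • v) := by
        exact eq_neg_of_add_eq_zero_left hmv
      have hnorm : (α : ℂ) * (α : ℂ) * dC v v = (β : ℂ) * (β : ℂ) * dC v v := by
        have e1 : dC ((α : ℂ) • A.mulVec v) ((α : ℂ) • A.mulVec v)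
            = (α : ℂ) * (α : ℂ) * dC v v := by
          rw [dC_smul_left, dC_smul_right, dC_mulVec hA1, Complex.conj_ofReal]
          ring
        have e2 : dC (-((β : ℂ) • v)) (-((β : ℂ) • v)) = (β : ℂ) * (β : ℂ) * dC v v := by
          have : -((β : ℂ) • v) = ((-β : ℝ) : ℂ) • v := by push_cast; simp [neg_smul]
          rw [this, dC_smul_left, dC_smul_right, Complex.conj_ofReal]
          push_cast 
          ring
        rw [← e1, ← e2, heq]
      have hd0 : dC v v = 0 := by
        have hc : ((α : ℂ) * α - (β : ℂ) * β) * dC v v = 0 := by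
          rw [sub_mul, hnorm, sub_self]
        rcases mul_eq_zero.mp hc with hc | hc
        · exfalso
          have : (α : ℂ) * α = (β : ℂ) * β := by linear_combination hc
          have hr : α * α = β * β := by exact_mod_cast this
          have : (α - β) * (α + β) = 0 := by ring_nf; linarith
          rcases mul_eq_zero.mp this with h' | h'
          · exact hab (by linarith)
          · linarith
        · exact hc
      exact dC_self_eq_zero hd0
  have ev : ∀ i : Fin 4, v i = 0 := fun i => by rw [hv0]; rfl
  exact ⟨ev 0, ev 1, ev 2⟩

section Continuity

variable {X : Type*} [TopologicalSpace X]

lemma cont_entry {f : X → V4} (hf : Continuous f) (i : Fin 4) :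
    Continuous fun p => f p i := (continuous_apply i).comp hf

lemma cont_dC {f g : X → V4} (hf : Continuous f) (hg : Continuous g) :
    Continuous fun p => dC (f p) (g p) := by
  simp only [dC]
  refine continuous_finset_sum _ fun i _ => ?_
  exact (Complex.continuous_conj.comp (cont_entry hf i)).mul (cont_entry hg i)

lemma cont_nv {f : X → V4} (hf : Continuous f) (h0 : ∀ p, f p ≠ 0) :
    Continuous fun p => nv (f p) := by
  refine continuous_pi fun i => ?_
  simp only [nv, Pi.smul_apply, smul_eq_mul]
  refine Continuous.mul ?_ (cont_entry hf i)
  refine Continuous.inv₀ ?_ ?_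
  · exact Complex.continuous_ofReal.comp (Real.continuous_sqrt.comp
      (Complex.continuous_re.comp (cont_dC hf hf)))
  · intro p
    have hpos : 0 < (dC (f p) (f p)).re := by
      rcases lt_or_eq_of_le (dC_self_re_nonneg (f p)) with h | h
      · exact h
      · exfalso
        exact h0 p (dC_self_eq_zero (by rw [dC_self_re, ← h, Complex.ofReal_zero]))
    simp only [ne_eq, Complex.ofReal_eq_zero]
    exact Real.sqrt_ne_zero'.mpr hpos

lemma cont_gs2 {f g : X → V4} (hf : Continuous f) (hg : Continuous g)
    (h0 : ∀ p, f p ≠ 0) : Continuous fun p => gs2 (f p) (g p) := by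
  refine continuous_pi fun i => ?_
  simp only [gs2, Pi.sub_apply, Pi.smul_apply, smul_eq_mul]
  refine Continuous.sub (cont_entry hg i) (Continuous.mul ?_ (cont_entry hf i))
  exact Continuous.div (cont_dC hf hg) (cont_dC hf hf) fun p => dC_ne_of_ne (h0 p)

lemma cont_gs3 {f g h : X → V4} (hf : Continuous f) (hg : Continuous g) (hh : Continuous h)
    (h0 : ∀ p, f p ≠ 0) (h0' : ∀ p, gs2 (f p) (g p) ≠ 0) :
    Continuous fun p => gs3 (f p) (g p) (h p) := by
  have hg2 : Continuous fun p => gs2 (f p) (g p) := cont_gs2 hf hg h0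
  refine continuous_pi fun i => ?_
  simp only [gs3, Pi.sub_apply, Pi.smul_apply, smul_eq_mul]
  refine Continuous.sub (Continuous.sub (cont_entry hh i)
    (Continuous.mul ?_ (cont_entry hf i))) (Continuous.mul ?_ (cont_entry hg2 i))
  · exact Continuous.div (cont_dC hf hh) (cont_dC hf hf) fun p => dC_ne_of_ne (h0 p)
  · exact Continuous.div (cont_dC hg2 hh) (cont_dC hg2 hg2) fun p => dC_ne_of_ne (h0' p)

lemma cont_crossv {f g h : X → V4} (hf : Continuous f) (hg : Continuous g)
    (hh : Continuous h) : Continuous fun p => crossv (f p) (g p) (h p) := by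
  refine continuous_pi fun i => ?_
  simp only [crossv]
  refine Complex.continuous_conj.comp ?_
  fin_cases i <;>
    · simp [cof, det3r]
      fun_prop

end Continuity

/-- the homotopy at time `t` -/
def Hmap (t : ℝ) (A : Matrix (Fin 4) (Fin 4) ℂ) : Matrix (Fin 4) (Fin 4) ℂ :=
  Phi (((Real.cos (Real.pi / 2 * t) : ℝ) : ℂ) • A + ((Real.sin (Real.pi / 2 * t) : ℝ) : ℂ) • 1)

lemma theta_mem {t : ℝ} (ht0 : 0 ≤ t) (ht1 : t ≤ 1) :
    0 ≤ Real.cos (Real.pi / 2 * t) ∧ 0 ≤ Real.sin (Real.pi / 2 * t) ∧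
      0 < Real.cos (Real.pi / 2 * t) + Real.sin (Real.pi / 2 * t) := by
  have hπ := Real.pi_pos
  have h1 : 0 ≤ Real.pi / 2 * t := by positivity
  have h2 : Real.pi / 2 * t ≤ Real.pi / 2 := by nlinarith
  have hc : 0 ≤ Real.cos (Real.pi / 2 * t) :=
    Real.cos_nonneg_of_mem_Icc ⟨by linarith, h2⟩
  have hs : 0 ≤ Real.sin (Real.pi / 2 * t) :=
    Real.sin_nonneg_of_nonneg_of_le_pi h1 (by linarith)
  refine ⟨hc, hs, ?_⟩
  nlinarith [Real.sin_sq_add_cos_sq (Real.pi / 2 * t)]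

lemma Hmap_indep {A : Matrix (Fin 4) (Fin 4) ℂ}
    (hA : A ∈ Matrix.specialUnitaryGroup (Fin 4) ℂ) (hE : eigDim A = 0)
    {t : ℝ} (ht0 : 0 ≤ t) (ht1 : t ≤ 1) :
    Indep (fun i => (((Real.cos (Real.pi / 2 * t) : ℝ) : ℂ) • A
        + ((Real.sin (Real.pi / 2 * t) : ℝ) : ℂ) • 1) i 0)
      (fun i => (((Real.cos (Real.pi / 2 * t) : ℝ) : ℂ) • A
        + ((Real.sin (Real.pi / 2 * t) : ℝ) : ℂ) • 1) i 1)
      (fun i => (((Real.cos (Real.pi / 2 * t) : ℝ) : ℂ) • A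
        + ((Real.sin (Real.pi / 2 * t) : ℝ) : ℂ) • 1) i 2) := by
  obtain ⟨hc, hs, hpos⟩ := theta_mem ht0 ht1
  exact indep_interp hA hE hc hs hpos

lemma Hmap_mem {A : Matrix (Fin 4) (Fin 4) ℂ}
    (hA : A ∈ Matrix.specialUnitaryGroup (Fin 4) ℂ) (hE : eigDim A = 0)
    {t : ℝ} (ht0 : 0 ≤ t) (ht1 : t ≤ 1) :
    Hmap t A ∈ Matrix.specialUnitaryGroup (Fin 4) ℂ :=
  Phi_mem_SU (Hmap_indep hA hE ht0 ht1)

lemma Hmap_zero {A : Matrix (Fin 4) (Fin 4) ℂ}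
    (hA : A ∈ Matrix.specialUnitaryGroup (Fin 4) ℂ) : Hmap 0 A = A := by
  have e : (((Real.cos (Real.pi / 2 * 0) : ℝ) : ℂ) • A
      + ((Real.sin (Real.pi / 2 * 0) : ℝ) : ℂ) • 1) = A := by
    rw [mul_zero, Real.cos_zero, Real.sin_zero]
    push_cast
    simp
  rw [Hmap, e]
  exact Phi_fix hA

lemma Hmap_one (A : Matrix (Fin 4) (Fin 4) ℂ) : Hmap 1 A = 1 := by
  have e : (((Real.cos (Real.pi / 2 * 1) : ℝ) : ℂ) • A
      + ((Real.sin (Real.pi / 2 * 1) : ℝ) : ℂ) • 1) = 1 := by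
    rw [mul_one, Real.cos_pi_div_two, Real.sin_pi_div_two]
    push_cast
    simp
  rw [Hmap, e]
  exact Phi_fix (one_mem _)

abbrev Y0 := {A : Matrix.specialUnitaryGroup (Fin 4) ℂ //
  eigDim (A : Matrix (Fin 4) (Fin 4) ℂ) = 0}

lemma cont_Hfull :
    Continuous fun p : unitInterval × Y0 =>
      Hmap (p.1 : ℝ) (p.2.1 : Matrix (Fin 4) (Fin 4) ℂ) := by
  set Bm : unitInterval × Y0 → Matrix (Fin 4) (Fin 4) ℂ := fun p =>
    ((Real.cos (Real.pi / 2 * (p.1 : ℝ)) : ℂ) • (p.2.1 : Matrix (Fin 4) (Fin 4) ℂ)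
      + ((Real.sin (Real.pi / 2 * (p.1 : ℝ)) : ℂ)) • 1) with hBm
  have hcos : Continuous fun p : unitInterval × Y0 =>
      ((Real.cos (Real.pi / 2 * (p.1 : ℝ)) : ℝ) : ℂ) :=
    Complex.continuous_ofReal.comp (Real.continuous_cos.comp
      (continuous_const.mul (continuous_subtype_val.comp continuous_fst)))
  have hsin : Continuous fun p : unitInterval × Y0 =>
      ((Real.sin (Real.pi / 2 * (p.1 : ℝ)) : ℝ) : ℂ) :=
    Complex.continuous_ofReal.comp (Real.continuous_sin.comp
      (continuous_const.mul (continuous_subtype_val.comp continuous_fst)))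
  have hAe : ∀ i j : Fin 4, Continuous fun p : unitInterval × Y0 =>
      (p.2.1 : Matrix (Fin 4) (Fin 4) ℂ) i j := by
    intro i j
    have hc : Continuous fun p : unitInterval × Y0 => (p.2.1 : Matrix (Fin 4) (Fin 4) ℂ) :=
      continuous_subtype_val.comp (continuous_subtype_val.comp continuous_snd)
    exact (continuous_apply j).comp ((continuous_apply i).comp hc)
  have hBe : ∀ i j : Fin 4, Continuous fun p => Bm p i j := by
    intro i j
    simp only [hBm, Matrix.add_apply, Matrix.smul_apply, smul_eq_mul]
    exact (hcos.mul (hAe i j)).add (hsin.mul continuous_const)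
  -- the three column functions
  have hb : ∀ j : Fin 4, Continuous fun p => (fun i => Bm p i j : V4) :=
    fun j => continuous_pi fun i => hBe i j
  -- nonvanishing facts
  have hind : ∀ p : unitInterval × Y0, Indep (fun i => Bm p i 0) (fun i => Bm p i 1)
      (fun i => Bm p i 2) := by
    intro p
    exact Hmap_indep p.2.1.2 p.2.2 p.1.2.1 p.1.2.2
  have h10 : ∀ p, (fun i => Bm p i 0 : V4) ≠ 0 := fun p => (hind p).b1_ne
  have h20 : ∀ p, gs2 (fun i => Bm p i 0) (fun i => Bm p i 1) ≠ 0 := fun p => (hind p).gs2_ne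
  have h30 : ∀ p, gs3 (fun i => Bm p i 0) (fun i => Bm p i 1) (fun i => Bm p i 2) ≠ 0 :=
    fun p => (hind p).gs3_ne
  have hq1 : Continuous fun p => nv (fun i => Bm p i 0) := cont_nv (hb 0) h10
  have hq2 : Continuous fun p => nv (gs2 (fun i => Bm p i 0) (fun i => Bm p i 1)) :=
    cont_nv (cont_gs2 (hb 0) (hb 1) h10) h20
  have hq3 : Continuous fun p =>
      nv (gs3 (fun i => Bm p i 0) (fun i => Bm p i 1) (fun i => Bm p i 2)) :=
    cont_nv (cont_gs3 (hb 0) (hb 1) (hb 2) h10 h20) h30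
  have hq4 : Continuous fun p =>
      crossv (nv (fun i => Bm p i 0)) (nv (gs2 (fun i => Bm p i 0) (fun i => Bm p i 1)))
        (nv (gs3 (fun i => Bm p i 0) (fun i => Bm p i 1) (fun i => Bm p i 2))) :=
    cont_crossv hq1 hq2 hq3
  have : (fun p : unitInterval × Y0 =>
      Hmap (p.1 : ℝ) (p.2.1 : Matrix (Fin 4) (Fin 4) ℂ)) = fun p => Phi (Bm p) := rfl
  rw [this]
  apply continuous_matrix
  intro i j
  have e : ∀ p, Phi (Bm p) i j = ![nv (fun i => Bm p i 0),
      nv (gs2 (fun i => Bm p i 0) (fun i => Bm p i 1)),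
      nv (gs3 (fun i => Bm p i 0) (fun i => Bm p i 1) (fun i => Bm p i 2)),
      crossv (nv (fun i => Bm p i 0)) (nv (gs2 (fun i => Bm p i 0) (fun i => Bm p i 1)))
        (nv (gs3 (fun i => Bm p i 0) (fun i => Bm p i 1) (fun i => Bm p i 2)))] j i := fun p => rfl
  simp only [e]
  fin_cases j
  · exact cont_entry hq1 i
  · exact cont_entry hq2 i
  · exact cont_entry hq3 i
  · exact cont_entry hq4 i

/-- The inclusion `Y₀ → SU(4)` is homotopic to the constant map at the identity matrix. -/
theorem Y0_inclusion_homotopic_const :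
    ContinuousMap.Homotopic
      (⟨fun A : {A : Matrix.specialUnitaryGroup (Fin 4) ℂ //
            eigDim (A : Matrix (Fin 4) (Fin 4) ℂ) = 0} => A.1,
        continuous_subtype_val⟩ :
        C({A : Matrix.specialUnitaryGroup (Fin 4) ℂ //
            eigDim (A : Matrix (Fin 4) (Fin 4) ℂ) = 0},
          Matrix.specialUnitaryGroup (Fin 4) ℂ))
      (ContinuousMap.const _ (1 : Matrix.specialUnitaryGroup (Fin 4) ℂ)) := by
  constructor
  refine
    { toFun := fun p : unitInterval × Y0 =>
        (⟨Hmap (p.1 : ℝ) (p.2.1 : Matrix (Fin 4) (Fin 4) ℂ),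
          Hmap_mem p.2.1.2 p.2.2 p.1.2.1 p.1.2.2⟩ : Matrix.specialUnitaryGroup (Fin 4) ℂ)
      continuous_toFun := ?_
      map_zero_left := ?_
      map_one_left := ?_ }
  · exact Continuous.subtype_mk cont_Hfull _
  · intro x
    simp only [ContinuousMap.coe_mk]
    exact Subtype.ext (by simpa using Hmap_zero x.1.2)
  · intro x
    simp only [ContinuousMap.coe_mk, ContinuousMap.const_apply]
    exact Subtype.ext (by simpa using Hmap_one (x.1 : Matrix (Fin 4) (Fin 4) ℂ))
end
end

section
/- Let k ∈ {0,1,2,3} and A ∈ SU(4). Then E(A) equals the span of the first k standard basis vectors e₁,…,e_k of ℂ⁴ (the zero subspace when k = 0) if and only if there exists B ∈ SU(4−k) such that: (i) A is the block-diagonal matrix whose upper-left k×k block is −I_k, whose off-diagonal blocks are zero, and whose lower-right (4−k)×(4−k) block is (−1)^k·B; and (ii) the only y ∈ ℂ^{4−k} whose final coordinate is zero and which satisfies B·y = (−1)^{k+1}·y is y = 0. -/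
/-- For `k ∈ {0,1,2,3}` and `A ∈ SU(4)`: `E(A)` equals the span of the first `k` standard
basis vectors of `ℂ⁴` if and only if `A` is block diagonal, `A = diag(-I_k, (-1)^k B)` for
some `B ∈ SU(4-k)` such that the only `y ∈ ℂ^{4-k}` with final coordinate zero and
`B·y = (-1)^{k+1}·y` is `y = 0`. -/
theorem espace_eq_span_iff_block (k : ℕ) (hk : k ≤ 3)
    (A : Matrix.specialUnitaryGroup (Fin 4) ℂ) :
    Espace (A : Matrix (Fin 4) (Fin 4) ℂ) =
      Submodule.span ℂ (Set.range fun i : Fin k =>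
        (Pi.single (Fin.castLE (show k ≤ 4 by omega) i) 1 : Fin 4 → ℂ)) ↔
    ∃ B ∈ Matrix.specialUnitaryGroup (Fin (4 - k)) ℂ,
      (A : Matrix (Fin 4) (Fin 4) ℂ) =
        Matrix.reindex (finSumFinEquiv.trans (finCongr (show k + (4 - k) = 4 by omega)))
          (finSumFinEquiv.trans (finCongr (show k + (4 - k) = 4 by omega)))
          (Matrix.fromBlocks (-1 : Matrix (Fin k) (Fin k) ℂ) 0 0 (((-1 : ℂ) ^ k) • B)) ∧
      ∀ y : Fin (4 - k) → ℂ, y ⟨4 - k - 1, by omega⟩ = 0 →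
        B.mulVec y = ((-1 : ℂ) ^ (k + 1)) • y → y = 0 := by
  have h4 : k + (4 - k) = 4 := by omega
  set e : Fin k ⊕ Fin (4 - k) ≃ Fin 4 := finSumFinEquiv.trans (finCongr h4) with he_def
  have he_inl : ∀ p : Fin k, ((e (Sum.inl p) : Fin 4) : ℕ) = (p : ℕ) := by
    intro p; simp [he_def]
  have he_inr : ∀ q : Fin (4 - k), ((e (Sum.inr q) : Fin 4) : ℕ) = k + (q : ℕ) := by
    intro q; simp [he_def]
  have hes_lt : ∀ (i : Fin 4) (h : (i : ℕ) < k), e.symm i = Sum.inl ⟨(i : ℕ), h⟩ := by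
    intro i h
    rw [Equiv.symm_apply_eq]
    exact (Fin.ext (he_inl _)).symm
  have hes_ge : ∀ (i : Fin 4) (h : k ≤ (i : ℕ)),
      e.symm i = Sum.inr ⟨(i : ℕ) - k, by have := i.isLt; omega⟩ := by
    intro i h
    rw [Equiv.symm_apply_eq]
    refine (Fin.ext ?_).symm
    rw [he_inr, Fin.val_mk]
    have := i.isLt; omega
  have mem_Espace : ∀ (M : Matrix (Fin 4) (Fin 4) ℂ) (x : Fin 4 → ℂ),
      x ∈ Espace M ↔ M.mulVec x = -x ∧ x 3 = 0 := by
    intro M x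
    rw [Espace, Submodule.mem_inf, LinearMap.mem_ker, LinearMap.mem_ker]
    simp [Matrix.mulVecLin_apply, add_eq_zero_iff_eq_neg]
  have sum_split : ∀ f : Fin 4 → ℂ, (∑ m, f m) =
      (∑ p : Fin k, f (e (Sum.inl p))) + ∑ q : Fin (4 - k), f (e (Sum.inr q)) := by
    intro f
    rw [← Equiv.sum_comp e f, Fintype.sum_sum_type]
  constructor
  · intro hE
    have hAU : (A : Matrix (Fin 4) (Fin 4) ℂ) ∈ Matrix.unitaryGroup (Fin 4) ℂ :=
      (Matrix.mem_specialUnitaryGroup_iff.mp A.2).1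
    have hAdet : (A : Matrix (Fin 4) (Fin 4) ℂ).det = 1 :=
      (Matrix.mem_specialUnitaryGroup_iff.mp A.2).2
    have hstar : star (A : Matrix (Fin 4) (Fin 4) ℂ) * (A : Matrix (Fin 4) (Fin 4) ℂ) = 1 :=
      Matrix.mem_unitaryGroup_iff'.mp hAU
    -- columns with index < k
    have hcol : ∀ (j : Fin 4), (j : ℕ) < k → ∀ i, (A : Matrix (Fin 4) (Fin 4) ℂ) i j
        = if i = j then -1 else 0 := by
      intro j hj i
      have hjeq : Fin.castLE (show k ≤ 4 by omega) (⟨(j : ℕ), hj⟩ : Fin k) = j := Fin.ext rfl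
      have hmem : (Pi.single j 1 : Fin 4 → ℂ) ∈ Espace (A : Matrix (Fin 4) (Fin 4) ℂ) := by
        rw [hE]
        refine Submodule.subset_span ⟨⟨(j : ℕ), hj⟩, ?_⟩
        show (Pi.single (Fin.castLE (show k ≤ 4 by omega) ⟨(j : ℕ), hj⟩) 1 : Fin 4 → ℂ)
          = Pi.single j 1
        rw [hjeq]
      have h2 := congrFun ((mem_Espace _ _).mp hmem).1 i
      rw [Matrix.mulVec_single] at h2
      rcases eq_or_ne i j with rfl | hne
      · simpa using h2
      · simpa [hne, Pi.single_eq_of_ne hne] using h2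
    -- rows with index < k
    have hrow : ∀ (i : Fin 4), (i : ℕ) < k → ∀ j, (A : Matrix (Fin 4) (Fin 4) ℂ) i j
        = if i = j then -1 else 0 := by
      intro i hi j
      have h1 : (1 : Matrix (Fin 4) (Fin 4) ℂ) i j = -(A : Matrix (Fin 4) (Fin 4) ℂ) i j := by
        rw [← hstar, Matrix.mul_apply, Finset.sum_eq_single i]
        · rw [Matrix.star_apply, hcol i hi i, if_pos rfl]; simp
        · intro m _ hm
          rw [Matrix.star_apply, hcol i hi m, if_neg hm, star_zero, zero_mul]
        · simp
      have h2 : (A : Matrix (Fin 4) (Fin 4) ℂ) i j = -((1 : Matrix (Fin 4) (Fin 4) ℂ) i j) := by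
        rw [h1, neg_neg]
      rw [h2, Matrix.one_apply]
      split <;> simp
    set B : Matrix (Fin (4 - k)) (Fin (4 - k)) ℂ :=
      fun p q => (-1 : ℂ) ^ k *
        (A : Matrix (Fin 4) (Fin 4) ℂ) (e (Sum.inr p)) (e (Sum.inr q)) with hBdef
    have hsq : ∀ z : ℂ, (-1 : ℂ) ^ k * ((-1 : ℂ) ^ k * z) = z := by
      intro z
      rw [← mul_assoc, ← mul_pow]; norm_num
    have hAblock : (A : Matrix (Fin 4) (Fin 4) ℂ) =
        Matrix.reindex e e
          (Matrix.fromBlocks (-1 : Matrix (Fin k) (Fin k) ℂ) 0 0 (((-1 : ℂ) ^ k) • B)) := by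
      ext i j
      rw [Matrix.reindex_apply, Matrix.submatrix_apply]
      rcases Nat.lt_or_ge (i : ℕ) k with hi | hi
      · rw [hes_lt i hi]
        rcases Nat.lt_or_ge (j : ℕ) k with hj | hj
        · rw [hes_lt j hj, hrow i hi j, Matrix.fromBlocks_apply₁₁,
            Matrix.neg_apply, Matrix.one_apply]
          have hiff : i = j ↔ (⟨(i : ℕ), hi⟩ : Fin k) = ⟨(j : ℕ), hj⟩ := by
            simp [Fin.ext_iff]
          by_cases h : i = j
          · rw [if_pos h, if_pos (hiff.mp h)]
          · rw [if_neg h, if_neg (fun hh => h (hiff.mpr hh)), neg_zero]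
        · rw [hes_ge j hj, hrow i hi j, Matrix.fromBlocks_apply₁₂,
            if_neg (Fin.ne_of_val_ne (by omega))]
          rfl
      · rw [hes_ge i hi]
        rcases Nat.lt_or_ge (j : ℕ) k with hj | hj
        · rw [hes_lt j hj, hcol j hj i, Matrix.fromBlocks_apply₂₁,
            if_neg (Fin.ne_of_val_ne (by omega))]
          rfl
        · rw [hes_ge j hj, Matrix.fromBlocks_apply₂₂, Matrix.smul_apply, smul_eq_mul]
          have hieq : e (Sum.inr ⟨(i : ℕ) - k, by have := i.isLt; omega⟩) = i :=
            Fin.ext (by rw [he_inr, Fin.val_mk]; have := i.isLt; omega)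
          have hjeq : e (Sum.inr ⟨(j : ℕ) - k, by have := j.isLt; omega⟩) = j :=
            Fin.ext (by rw [he_inr, Fin.val_mk]; have := j.isLt; omega)
          simp only [hBdef]
          rw [hieq, hjeq, hsq]
    have hBstar : star B * B = 1 := by
      ext p q
      rw [Matrix.mul_apply]
      have hsum : ∀ r, (star B) p r * B r q
          = star ((A : Matrix (Fin 4) (Fin 4) ℂ) (e (Sum.inr r)) (e (Sum.inr p))) *
            (A : Matrix (Fin 4) (Fin 4) ℂ) (e (Sum.inr r)) (e (Sum.inr q)) := by
        intro r
        rw [Matrix.star_apply, hBdef]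
        simp only [star_mul', star_pow, star_neg, star_one]
        rw [mul_mul_mul_comm, ← mul_pow]
        norm_num
      rw [Finset.sum_congr rfl fun r _ => hsum r]
      have h1 := congrFun (congrFun hstar (e (Sum.inr p))) (e (Sum.inr q))
      rw [Matrix.mul_apply] at h1
      simp only [Matrix.star_apply] at h1
      rw [sum_split] at h1
      rw [Finset.sum_eq_zero (fun s _ => by
        rw [hrow (e (Sum.inl s)) (by rw [he_inl]; exact s.isLt) (e (Sum.inr p)),
          if_neg (Fin.ne_of_val_ne (by rw [he_inl, he_inr]; omega)), star_zero, zero_mul]),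
        zero_add] at h1
      rw [h1, Matrix.one_apply, Matrix.one_apply]
      have hiff : e (Sum.inr p) = e (Sum.inr q) ↔ p = q := by
        rw [Equiv.apply_eq_iff_eq]; exact Sum.inr_injective.eq_iff
      by_cases h : p = q
      · rw [if_pos (hiff.mpr h), if_pos h]
      · rw [if_neg (fun hh => h (hiff.mp hh)), if_neg h]
    have hBdet : B.det = 1 := by
      have h1 := hAdet
      rw [hAblock, Matrix.det_reindex_self, Matrix.det_fromBlocks_zero₂₁,
        Matrix.det_smul] at h1
      have hd1 : (-1 : Matrix (Fin k) (Fin k) ℂ).det = (-1 : ℂ) ^ k := by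
        simp [Matrix.det_neg]
      rw [hd1, Fintype.card_fin] at h1
      have hsgn : (-1 : ℂ) ^ k * ((-1 : ℂ) ^ k) ^ (4 - k) = 1 := by
        rw [← pow_mul, ← pow_add]
        refine Even.neg_one_pow ?_
        rcases Nat.even_or_odd k with h | h
        · exact h.add (h.mul_right _)
        · refine h.add_odd (h.mul ?_)
          rw [Nat.odd_iff] at h ⊢
          omega
      calc B.det = (-1 : ℂ) ^ k * (((-1 : ℂ) ^ k) ^ (4 - k) * B.det) := by
            rw [← mul_assoc, hsgn, one_mul]
        _ = 1 := h1
    refine ⟨B, Matrix.mem_specialUnitaryGroup_iff.mpr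
      ⟨Matrix.mem_unitaryGroup_iff'.mpr hBstar, hBdet⟩, hAblock, ?_⟩
    intro y hy3 hyB
    have hxE : (Sum.elim (0 : Fin k → ℂ) y ∘ e.symm) ∈
        Espace (A : Matrix (Fin 4) (Fin 4) ℂ) := by
      rw [mem_Espace]
      constructor
      · rw [hAblock, Matrix.reindex_apply, Matrix.submatrix_mulVec_equiv]
        have hxe : (Sum.elim (0 : Fin k → ℂ) y ∘ e.symm) ∘ ⇑e.symm.symm
            = Sum.elim (0 : Fin k → ℂ) y := by
          funext s
          simp [Equiv.symm_symm, Equiv.symm_apply_apply]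
        rw [hxe, Matrix.fromBlocks_mulVec]
        simp only [Sum.elim_comp_inl, Sum.elim_comp_inr, Matrix.mulVec_zero,
          Matrix.zero_mulVec, add_zero, zero_add, Matrix.smul_mulVec, hyB]
        have hsm : (-1 : ℂ) ^ k • ((-1 : ℂ) ^ (k + 1) • y) = -y := by
          rw [smul_smul, ← pow_add]
          have : Odd (k + (k + 1)) := ⟨k, by ring⟩
          rw [this.neg_one_pow, neg_one_smul]
        rw [hsm]
        funext i
        simp only [Function.comp_apply, Pi.neg_apply]
        cases h : e.symm i with
        | inl p => simp
        | inr q => simp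
      · have h3 : e.symm 3 = Sum.inr ⟨3 - k, by omega⟩ := hes_ge 3 (by
          show k ≤ ((3 : Fin 4) : ℕ); omega)
        simp only [Function.comp_apply, h3, Sum.elim_inr]
        have : (⟨3 - k, by omega⟩ : Fin (4 - k)) = ⟨4 - k - 1, by omega⟩ := by
          simp only [Fin.mk.injEq]; omega
        rw [this, hy3]
    rw [hE] at hxE
    have hx0 : ∀ (i : Fin 4), k ≤ (i : ℕ) → (Sum.elim (0 : Fin k → ℂ) y ∘ e.symm) i = 0 := by
      intro i hi
      have hle : Submodule.span ℂ (Set.range fun p : Fin k =>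
          (Pi.single (Fin.castLE (show k ≤ 4 by omega) p) 1 : Fin 4 → ℂ)) ≤
          LinearMap.ker (LinearMap.proj (R := ℂ) (φ := fun _ : Fin 4 => ℂ) i) := by
        rw [Submodule.span_le]
        rintro _ ⟨p, rfl⟩
        rw [SetLike.mem_coe, LinearMap.mem_ker, LinearMap.proj_apply]
        exact Pi.single_eq_of_ne (Fin.ne_of_val_ne (by
          rw [Fin.coe_castLE]; have := p.isLt; omega)) 1
      have := hle hxE
      rwa [LinearMap.mem_ker, LinearMap.proj_apply] at this
    funext q
    have h1 := hx0 (e (Sum.inr q)) (by rw [he_inr]; omega)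
    simpa using h1
  · rintro ⟨B, hB, hA, hy⟩
    apply le_antisymm
    · -- Espace ≤ span
      intro x hx
      rw [mem_Espace] at hx
      obtain ⟨hx1, hx3⟩ := hx
      have hme : (A : Matrix (Fin 4) (Fin 4) ℂ).mulVec x =
          ((Matrix.fromBlocks (-1 : Matrix (Fin k) (Fin k) ℂ) 0 0
            (((-1 : ℂ) ^ k) • B)).mulVec (x ∘ e)) ∘ e.symm := by
        rw [hA, Matrix.reindex_apply, Matrix.submatrix_mulVec_equiv]
        rfl
      rw [hme] at hx1
      have hyB : B.mulVec (fun q => x (e (Sum.inr q))) =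
          ((-1 : ℂ) ^ (k + 1)) • (fun q => x (e (Sum.inr q))) := by
        funext q
        have h1 := congrFun hx1 (e (Sum.inr q))
        rw [Matrix.fromBlocks_mulVec] at h1
        simp only [Function.comp_apply, Equiv.symm_apply_apply, Sum.elim_inr,
          Pi.neg_apply, Matrix.zero_mulVec, zero_add, Pi.add_apply,
          Matrix.smul_mulVec, Pi.smul_apply, smul_eq_mul] at h1
        have hone : (-1 : ℂ) ^ k * (-1 : ℂ) ^ k = 1 := by rw [← mul_pow]; norm_num
        show B.mulVec ((x ∘ e) ∘ Sum.inr) q = ((-1 : ℂ) ^ (k + 1)) * x (e (Sum.inr q))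
        calc B.mulVec ((x ∘ e) ∘ Sum.inr) q
            = ((-1 : ℂ) ^ k * (-1 : ℂ) ^ k) * B.mulVec ((x ∘ e) ∘ Sum.inr) q := by
              rw [hone, one_mul]
          _ = (-1 : ℂ) ^ k * ((-1 : ℂ) ^ k * B.mulVec ((x ∘ e) ∘ Sum.inr) q) := by ring
          _ = (-1 : ℂ) ^ k * (-(x (e (Sum.inr q)))) := by rw [h1]
          _ = ((-1 : ℂ) ^ (k + 1)) * x (e (Sum.inr q)) := by rw [pow_succ]; ring
      have hylast : (fun q => x (e (Sum.inr q))) (⟨4 - k - 1, by omega⟩ : Fin (4 - k)) = 0 := by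
        have h0 : ((3 : Fin 4) : ℕ) = 3 := rfl
        have h1 : e (Sum.inr (⟨4 - k - 1, by omega⟩ : Fin (4 - k))) = 3 := by
          refine Fin.ext ?_
          rw [he_inr, Fin.val_mk, h0]
          omega
        simpa [h1] using hx3
      have hy0 := hy _ hylast hyB
      have hxs : x = ∑ i : Fin 4, x i • (Pi.single i 1 : Fin 4 → ℂ) := by
        have h1 := Finset.univ_sum_single x
        calc x = ∑ i : Fin 4, (Pi.single i (x i) : Fin 4 → ℂ) := h1.symm
          _ = ∑ i : Fin 4, x i • (Pi.single i 1 : Fin 4 → ℂ) := by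
            refine Finset.sum_congr rfl fun i _ => ?_
            rw [← Pi.single_smul, smul_eq_mul, mul_one]
      rw [hxs]
      refine Submodule.sum_mem _ fun i _ => ?_
      rcases Nat.lt_or_ge (i : ℕ) k with hik | hik
      · have hceq : Fin.castLE (show k ≤ 4 by omega) (⟨(i : ℕ), hik⟩ : Fin k) = i :=
          Fin.ext rfl
        have hmem : (Pi.single i 1 : Fin 4 → ℂ) ∈ Set.range (fun p : Fin k =>
            (Pi.single (Fin.castLE (show k ≤ 4 by omega) p) 1 : Fin 4 → ℂ)) := by
          refine Set.mem_range.mpr ⟨⟨(i : ℕ), hik⟩, ?_⟩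
          show (Pi.single (Fin.castLE (show k ≤ 4 by omega) ⟨(i : ℕ), hik⟩) 1 : Fin 4 → ℂ)
            = Pi.single i 1
          rw [hceq]
        exact Submodule.smul_mem _ _ (Submodule.subset_span hmem)
      · have hieq : e (Sum.inr ⟨(i : ℕ) - k, by have := i.isLt; omega⟩) = i :=
          Fin.ext (by rw [he_inr, Fin.val_mk]; have := i.isLt; omega)
        have hxi : x i = 0 := by
          simpa [hieq] using congrFun hy0 ⟨(i : ℕ) - k, by have := i.isLt; omega⟩
        rw [hxi, zero_smul]
        exact Submodule.zero_mem _
    · rw [Submodule.span_le]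
      rintro _ ⟨p, rfl⟩
      rw [SetLike.mem_coe, mem_Espace]
      have hpc : ((Fin.castLE (show k ≤ 4 by omega) p : Fin 4) : ℕ) = (p : ℕ) :=
        Fin.coe_castLE _ p
      constructor
      · rw [hA, Matrix.reindex_apply, Matrix.submatrix_mulVec_equiv]
        have hgc : (Pi.single (Fin.castLE (show k ≤ 4 by omega) p) 1 : Fin 4 → ℂ) ∘ ⇑e.symm.symm
            = Sum.elim (Pi.single p (1 : ℂ)) 0 := by
          funext s
          rw [Equiv.symm_symm]
          cases s with
          | inl r =>
            simp only [Function.comp_apply, Sum.elim_inl]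
            rw [Pi.single_apply, Pi.single_apply]
            have hiff : e (Sum.inl r) = Fin.castLE (show k ≤ 4 by omega) p ↔ r = p := by
              rw [Fin.ext_iff, he_inl, hpc, Fin.ext_iff]
            by_cases h : r = p
            · rw [if_pos (hiff.mpr h), if_pos h]
            · rw [if_neg (fun hh => h (hiff.mp hh)), if_neg h]
          | inr r =>
            simp only [Function.comp_apply, Sum.elim_inr, Pi.zero_apply]
            refine Pi.single_eq_of_ne (Fin.ne_of_val_ne ?_) 1
            rw [he_inr, hpc]
            have := p.isLt; omega
        rw [hgc, Matrix.fromBlocks_mulVec]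
        simp only [Sum.elim_comp_inl, Sum.elim_comp_inr, Matrix.mulVec_zero,
          Matrix.zero_mulVec, add_zero, zero_add, Matrix.neg_mulVec, Matrix.one_mulVec]
        funext i
        simp only [Function.comp_apply, Pi.neg_apply]
        rcases Nat.lt_or_ge (i : ℕ) k with hi | hi
        · rw [hes_lt i hi]
          simp only [Sum.elim_inl, Pi.neg_apply]
          rw [Pi.single_apply, Pi.single_apply]
          have hiff : (⟨(i : ℕ), hi⟩ : Fin k) = p ↔ i = Fin.castLE (show k ≤ 4 by omega) p := by
            rw [Fin.ext_iff, Fin.ext_iff, hpc]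
          by_cases h : (⟨(i : ℕ), hi⟩ : Fin k) = p
          · rw [if_pos h, if_pos (hiff.mp h)]
          · rw [if_neg h, if_neg (fun hh => h (hiff.mpr hh))]
        · rw [hes_ge i hi]
          simp only [Sum.elim_inr, Pi.zero_apply]
          rw [Pi.single_eq_of_ne (Fin.ne_of_val_ne (by rw [hpc]; have := p.isLt; omega)) 1,
            neg_zero]
      · have h33 : ((3 : Fin 4) : ℕ) = 3 := rfl
        exact Pi.single_eq_of_ne (Fin.ne_of_val_ne (by
          rw [hpc, h33]; have := p.isLt; omega)) 1
end

section
/- For B ∈ SU(2), let ι(B) ∈ SU(4) denote the block-diagonal matrix diag(I₂, B) (upper-left 2×2 block the identity, lower-right 2×2 block B, off-diagonal blocks zero). Then d(ι(B)) ≥ 1 if and only if B = −I₂, and in that case d(ι(−I₂)) = 1. In other words, the intersection of the closure of Y₁ with the image of ι equals the single matrix diag(1,1,−1,−1), and this matrix lies in Y₁. -/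
/-- The block-diagonal embedding `ι : SU(2) → SU(4)`, `ι(B) = diag(I₂, B)`. -/
noncomputable def iotaMat (B : Matrix (Fin 2) (Fin 2) ℂ) : Matrix (Fin 4) (Fin 4) ℂ :=
  Matrix.reindex finSumFinEquiv finSumFinEquiv
    (Matrix.fromBlocks (1 : Matrix (Fin 2) (Fin 2) ℂ) 0 0 B)

lemma mem_Espace_iota (B : Matrix (Fin 2) (Fin 2) ℂ) (x : Fin 4 → ℂ) :
    x ∈ Espace (iotaMat B) ↔
      (x 0 = 0 ∧ x 1 = 0 ∧ x 3 = 0 ∧ B 0 0 * x 2 = -x 2 ∧ B 1 0 * x 2 = 0) := by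
  have h0 : ((finSumFinEquiv.symm (0 : Fin (2+2))) : Fin 2 ⊕ Fin 2) = Sum.inl (0:Fin 2) := by decide
  have h1 : ((finSumFinEquiv.symm (1 : Fin (2+2))) : Fin 2 ⊕ Fin 2) = Sum.inl (1:Fin 2) := by decide
  have h2 : ((finSumFinEquiv.symm (2 : Fin (2+2))) : Fin 2 ⊕ Fin 2) = Sum.inr (0:Fin 2) := by decide
  have h3 : ((finSumFinEquiv.symm (3 : Fin (2+2))) : Fin 2 ⊕ Fin 2) = Sum.inr (1:Fin 2) := by decide
  have h3' : ((finSumFinEquiv.symm (Fin.succ 2 : Fin (2+2))) : Fin 2 ⊕ Fin 2) = Sum.inr (1:Fin 2) := by decide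
  simp only [Espace, iotaMat, Submodule.mem_inf, LinearMap.mem_ker, LinearMap.add_apply,
    Matrix.mulVecLin_apply, LinearMap.id_apply, LinearMap.proj_apply, funext_iff,
    Fin.forall_fin_succ_pi, Fin.forall_fin_succ]
  simp [Matrix.mulVec, dotProduct, funext_iff, Fin.forall_fin_succ,
    Fin.sum_univ_four, Matrix.reindex_apply, Matrix.submatrix_apply, h0, h1, h2, h3, h3',
    Matrix.one_apply]
  have hs : (Fin.succ 2 : Fin 4) = 3 := rfl
  constructor
  · rintro ⟨⟨hx0, hx1, ha, hb⟩, hx3⟩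
    rw [hx3] at ha hb
    exact ⟨hx0, hx1, hx3, by linear_combination ha,
      mul_eq_zero.mp (by linear_combination hb)⟩
  · rintro ⟨hx0, hx1, hx3, ha, hb⟩
    refine ⟨⟨hx0, hx1, by rw [hx3]; linear_combination ha, ?_⟩, hx3⟩
    rw [hx3]
    rcases hb with hb | hb <;> rw [hb] <;> ring

lemma Espace_neg_one :
    Espace (iotaMat (-(1 : Matrix (Fin 2) (Fin 2) ℂ))) =
      Submodule.span ℂ {Pi.single (2 : Fin 4) (1 : ℂ)} := by
  ext x
  rw [mem_Espace_iota, Submodule.mem_span_singleton]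
  constructor
  · rintro ⟨hx0, hx1, hx3, -, -⟩
    refine ⟨x 2, funext fun i => ?_⟩
    fin_cases i <;> simp [hx0, hx1, hx3, Pi.single_apply]
  · rintro ⟨a, rfl⟩
    simp [Pi.single_apply]

lemma eigDim_neg_one : eigDim (iotaMat (-(1 : Matrix (Fin 2) (Fin 2) ℂ))) = 1 := by
  rw [eigDim, Espace_neg_one]
  exact finrank_span_singleton (by simp [funext_iff]; exact ⟨2, by simp⟩)

/-- For `B ∈ SU(2)`, `d(ι(B)) ≥ 1` iff `B = -I₂`, and `d(ι(-I₂)) = 1`; i.e. the closure of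
`Y₁` meets the image of `ι` exactly in `diag(1,1,-1,-1)`, which lies in `Y₁`. -/
theorem closure_Y1_inter_iota :
    (∀ B : Matrix (Fin 2) (Fin 2) ℂ, B ∈ Matrix.specialUnitaryGroup (Fin 2) ℂ →
      (1 ≤ eigDim (iotaMat B) ↔ B = -(1 : Matrix (Fin 2) (Fin 2) ℂ))) ∧
    eigDim (iotaMat (-(1 : Matrix (Fin 2) (Fin 2) ℂ))) = 1 := by
  refine ⟨fun B hB => ⟨fun h => ?_, fun h => by rw [h, eigDim_neg_one]⟩, eigDim_neg_one⟩
  -- Espace is nontrivial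
  have hne : Espace (iotaMat B) ≠ ⊥ := by
    intro hbot
    rw [eigDim, hbot, finrank_bot] at h
    omega
  obtain ⟨x, hx, hx0⟩ := Submodule.ne_bot_iff _ |>.mp hne
  rw [mem_Espace_iota] at hx
  obtain ⟨h0, h1, h3, ha, hb⟩ := hx
  have hx2 : x 2 ≠ 0 := by
    intro h2
    apply hx0
    funext i
    fin_cases i <;> assumption
  have hB00 : B 0 0 = -1 :=
    mul_right_cancel₀ hx2 (by linear_combination ha)
  have hB10 : B 1 0 = 0 := by
    rcases mul_eq_zero.mp hb with h | h
    · exact h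
    · exact absurd h hx2
  obtain ⟨hu, hdet⟩ := Matrix.mem_specialUnitaryGroup_iff.mp hB
  have hu' := Matrix.mem_unitaryGroup_iff'.mp hu
  have hB01 : B 0 1 = 0 := by
    have := congrFun (congrFun hu' 0) 1
    simp [Matrix.mul_apply, Fin.sum_univ_two, Matrix.one_apply, hB00, hB10] at this
    simpa using this
  have hB11 : B 1 1 = -1 := by
    rw [Matrix.det_fin_two, hB00, hB01, hB10] at hdet
    linear_combination -hdet
  ext i j
  fin_cases i <;> fin_cases j <;>
    simp [hB00, hB01, hB10, hB11, Matrix.one_apply]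
end

section
/- For C ∈ SU(3), let ĵ(C) ∈ SU(4) denote the block-diagonal matrix diag(1, C) (upper-left 1×1 block equal to 1, lower-right 3×3 block C, off-diagonal blocks zero). Then d(ĵ(C)) ≥ 2 if and only if C = diag(−1,−1,1), and in that case d(ĵ(C)) = 2. In other words, the intersection of the closure of Y₂ with the image of ĵ equals the single matrix diag(1,−1,−1,1), and this matrix lies in Y₂. -/
/-- The block-diagonal embedding `ĵ : SU(3) → SU(4)`, `ĵ(C) = diag(1, C)`. -/
noncomputable def jMat (C : Matrix (Fin 3) (Fin 3) ℂ) : Matrix (Fin 4) (Fin 4) ℂ :=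
  Matrix.reindex finSumFinEquiv finSumFinEquiv
    (Matrix.fromBlocks (1 : Matrix (Fin 1) (Fin 1) ℂ) 0 0 C)

lemma mem_Espace {A : Matrix (Fin 4) (Fin 4) ℂ} {x : Fin 4 → ℂ} :
    x ∈ Espace A ↔ A.mulVec x + x = 0 ∧ x 3 = 0 := by
  simp [Espace, LinearMap.mem_ker]

lemma jMat_eq (C : Matrix (Fin 3) (Fin 3) ℂ) : jMat C =
    Matrix.of ![![1,0,0,0], ![0, C 0 0, C 0 1, C 0 2], ![0, C 1 0, C 1 1, C 1 2],
      ![0, C 2 0, C 2 1, C 2 2]] := by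
  ext i j
  fin_cases i <;> fin_cases j <;> rfl

noncomputable def ee (k : Fin 4) : Fin 4 → ℂ := Pi.single k 1

noncomputable def Vspan : Submodule ℂ (Fin 4 → ℂ) :=
  Submodule.span ℂ {ee 1, ee 2}

lemma li_pair : LinearIndependent ℂ ![ee 1, ee 2] := by
  have h := (Pi.basisFun ℂ (Fin 4)).linearIndependent.comp ![1, 2]
    (by decide : Function.Injective ![(1 : Fin 4), 2])
  convert h using 1
  funext i
  fin_cases i <;> simp [ee]

lemma finrank_Vspan : Module.finrank ℂ Vspan = 2 := by
  have : Vspan = Submodule.span ℂ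
      (Set.range ![ee 1, ee 2]) := by
    rw [Vspan]
    congr 1
    simp [Matrix.range_cons, Matrix.range_empty, Set.pair_comm]
  rw [this, finrank_span_eq_card li_pair]
  rfl

lemma Espace_le (C : Matrix (Fin 3) (Fin 3) ℂ) : Espace (jMat C) ≤ Vspan := by
  intro x hx
  rw [mem_Espace] at hx
  obtain ⟨h1, h3⟩ := hx
  have h0 : x 0 = 0 := by
    have e0 := congrFun h1 0
    simp [jMat_eq, Matrix.mulVec, dotProduct, Fin.sum_univ_four, Matrix.vecHead, Matrix.vecTail] at e0
    linear_combination e0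
  have hx' : x = x 1 • ee 1 + x 2 • ee 2 := by
    funext i
    fin_cases i <;> simp [h0, h3, ee, Pi.single_apply]
  rw [hx']
  exact Submodule.add_mem _
    (Submodule.smul_mem _ _ (Submodule.subset_span (Or.inl rfl)))
    (Submodule.smul_mem _ _ (Submodule.subset_span (Or.inr rfl)))

lemma Espace_diag : Espace (jMat (Matrix.diagonal ![-1, -1, 1])) = Vspan := by
  apply le_antisymm (Espace_le _)
  rw [Vspan, Submodule.span_le]
  rintro x (rfl | rfl) <;>
  · rw [SetLike.mem_coe, mem_Espace]
    constructor
    · funext i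
      fin_cases i <;>
        simp [jMat_eq, Matrix.mulVec, dotProduct, Fin.sum_univ_four, Matrix.vecHead, Matrix.vecTail, ee, Pi.single_apply,
          Matrix.diagonal]
    · simp [ee, Pi.single_apply]

/-- For `C ∈ SU(3)`, `d(ĵ(C)) ≥ 2` iff `C = diag(-1,-1,1)`, and in that case `d(ĵ(C)) = 2`;
i.e. the closure of `Y₂` meets the image of `ĵ` exactly in `diag(1,-1,-1,1)`, which
lies in `Y₂`. -/
theorem closure_Y2_inter_j :
    (∀ C : Matrix (Fin 3) (Fin 3) ℂ, C ∈ Matrix.specialUnitaryGroup (Fin 3) ℂ →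
      (2 ≤ eigDim (jMat C) ↔ C = Matrix.diagonal ![-1, -1, 1])) ∧
    eigDim (jMat (Matrix.diagonal ![-1, -1, 1])) = 2 := by
  have hdim2 : eigDim (jMat (Matrix.diagonal ![-1, -1, 1])) = 2 := by
    rw [eigDim, Espace_diag, finrank_Vspan]
  refine ⟨fun C hC => ⟨fun h2 => ?_, fun hCeq => by rw [hCeq, hdim2]⟩, hdim2⟩
  rw [Matrix.mem_specialUnitaryGroup_iff, Matrix.mem_unitaryGroup_iff'] at hC
  obtain ⟨hu, hdet⟩ := hC
  have hWV : Espace (jMat C) = Vspan :=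
    Submodule.eq_of_le_of_finrank_le (Espace_le C) (by rw [finrank_Vspan]; exact h2)
  have he1 : ee 1 ∈ Espace (jMat C) := by
    rw [hWV]; exact Submodule.subset_span (Or.inl rfl)
  have he2 : ee 2 ∈ Espace (jMat C) := by
    rw [hWV]; exact Submodule.subset_span (Or.inr rfl)
  rw [mem_Espace] at he1 he2
  -- column 0 of C
  have c00 : C 0 0 = -1 := by
    have := congrFun he1.1 1
    simp [jMat_eq, Matrix.mulVec, dotProduct, Fin.sum_univ_four, Matrix.vecHead, Matrix.vecTail, ee, Pi.single_apply] at this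
    linear_combination this
  have c10 : C 1 0 = 0 := by
    have := congrFun he1.1 2
    simp [jMat_eq, Matrix.mulVec, dotProduct, Fin.sum_univ_four, Matrix.vecHead, Matrix.vecTail, ee, Pi.single_apply] at this
    linear_combination this
  have c20 : C 2 0 = 0 := by
    have := congrFun he1.1 3
    simpa [jMat_eq, Matrix.mulVec, dotProduct, Fin.sum_univ_four, Matrix.vecHead, Matrix.vecTail, ee, Pi.single_apply] using this
  have c01 : C 0 1 = 0 := by
    have := congrFun he2.1 1
    simp [jMat_eq, Matrix.mulVec, dotProduct, Fin.sum_univ_four, Matrix.vecHead, Matrix.vecTail, ee, Pi.single_apply] at this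
    linear_combination this
  have c11 : C 1 1 = -1 := by
    have := congrFun he2.1 2
    simp [jMat_eq, Matrix.mulVec, dotProduct, Fin.sum_univ_four, Matrix.vecHead, Matrix.vecTail, ee, Pi.single_apply] at this
    linear_combination this
  have c21 : C 2 1 = 0 := by
    have := congrFun he2.1 3
    simpa [jMat_eq, Matrix.mulVec, dotProduct, Fin.sum_univ_four, Matrix.vecHead, Matrix.vecTail, ee, Pi.single_apply] using this
  -- column 2 from unitarity
  have c02 : C 0 2 = 0 := by
    have := congrFun (congrFun hu 0) 2
    simp [Matrix.mul_apply, Fin.sum_univ_three, Matrix.star_apply, c00, c10, c20,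
      Matrix.one_apply] at this
    simpa using this
  have c12 : C 1 2 = 0 := by
    have := congrFun (congrFun hu 1) 2
    simp [Matrix.mul_apply, Fin.sum_univ_three, Matrix.star_apply, c01, c11, c21,
      Matrix.one_apply] at this
    simpa using this
  have c22 : C 2 2 = 1 := by
    rw [Matrix.det_fin_three, c00, c10, c20, c01, c11, c21, c02, c12] at hdet
    linear_combination hdet
  ext i j
  fin_cases i <;> fin_cases j <;>
    simp [Matrix.diagonal, c00, c10, c20, c01, c11, c21, c02, c12, c22]
end
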